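/- If A ∈ ℝ^{n×n} is entrywise nonnegative, then ρ((A + A^T)/2) ≥ ρ(A), where ρ denotes the spectral radius. -/

import Mathlib

open Matrix

set_option maxHeartbeats 1000000 in
/-- For a nonnegative real matrix `A`, the spectral radius of the symmetric part
`(A + Aᵀ)/2` is at least the spectral radius of `A`. -/
theorem spectralRadius_symm_part_ge (n : ℕ) (A : Matrix (Fin n) (Fin n) ℝ)
    (hA : ∀ i j : Fin n, 0 ≤ A i j) :
    spectralRadius ℂ (A.map (fun t : ℝ => (t : ℂ))) ≤
      spectralRadius ℂ ((((1 : ℝ)/2) • (A + Aᵀ)).map (fun t : ℝ => (t : ℂ))) := by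
  set S : Matrix (Fin n) (Fin n) ℝ := ((1 : ℝ)/2) • (A + Aᵀ) with hSdef
  set M : Matrix (Fin n) (Fin n) ℂ := A.map (fun t : ℝ => (t : ℂ)) with hMdef
  set T : Matrix (Fin n) (Fin n) ℂ := S.map (fun t : ℝ => (t : ℂ)) with hTdef
  have hTsa : IsSelfAdjoint T := by
    show Tᴴ = T
    ext i j
    simp [hTdef, hSdef, conjTranspose_apply, map_apply, transpose_apply]
    ring
  set C : EuclideanSpace ℂ (Fin n) →L[ℂ] EuclideanSpace ℂ (Fin n) :=
    toEuclideanCLM (𝕜 := ℂ) (n := Fin n) T with hCdef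
  have hCsa : IsSelfAdjoint C := by
    show star C = C
    rw [hCdef, ← map_star]
    exact congrArg _ hTsa
  have hspecT : spectralRadius ℂ T = spectralRadius ℂ C := by
    unfold spectralRadius
    rw [hCdef, AlgEquiv.spectrum_eq (toEuclideanCLM (𝕜 := ℂ) (n := Fin n)) T]
  rw [hspecT, hCsa.spectralRadius_eq_nnnorm, spectralRadius]
  refine iSup₂_le fun μ hμ => ?_
  rw [ENNReal.coe_le_coe, ← NNReal.coe_le_coe, coe_nnnorm, coe_nnnorm]
  -- extract an eigenvector
  have hdet : (algebraMap ℂ (Matrix (Fin n) (Fin n) ℂ) μ - M).det = 0 := by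
    by_contra h
    exact (spectrum.mem_iff.mp hμ) ((Matrix.isUnit_iff_isUnit_det _).mpr (Ne.isUnit h))
  obtain ⟨v, hv0, hv⟩ := (Matrix.exists_mulVec_eq_zero_iff).mpr hdet
  have heig : M *ᵥ v = μ • v := by
    rw [sub_mulVec, Algebra.algebraMap_eq_smul_one, smul_mulVec, one_mulVec,
      sub_eq_zero] at hv
    exact hv.symm
  set x : Fin n → ℝ := fun i => ‖v i‖ with hxdef
  have hx0 : ∀ i, 0 ≤ x i := fun i => norm_nonneg _
  set r : ℝ := ∑ i, x i ^ 2 with hrdef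
  have hr0 : 0 < r := by
    obtain ⟨i, hi⟩ := Function.ne_iff.mp hv0
    refine Finset.sum_pos' (fun j _ => sq_nonneg _) ⟨i, Finset.mem_univ i, ?_⟩
    have : 0 < ‖v i‖ := norm_pos_iff.mpr hi
    positivity
  have conj_mul : ∀ z : ℂ, (starRingEnd ℂ) z * z = ((‖z‖ ^ 2 : ℝ) : ℂ) := by
    intro z
    rw [mul_comm, Complex.mul_conj]
    exact congrArg _ (by rw [Complex.normSq_eq_norm_sq])
  -- Step A : ‖μ‖ * r ≤ ∑∑ x i * A i j * x j
  have lhs_eq : ∑ i, (starRingEnd ℂ) (v i) * (M *ᵥ v) i = μ * (r : ℂ) := by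
    rw [heig]
    have e : ∀ i, (starRingEnd ℂ) (v i) * (μ • v) i = μ * ((x i ^ 2 : ℝ) : ℂ) := by
      intro i
      simp only [Pi.smul_apply, smul_eq_mul]
      rw [show (starRingEnd ℂ) (v i) * (μ * v i) = μ * ((starRingEnd ℂ) (v i) * v i) by ring,
        conj_mul]
    rw [Finset.sum_congr rfl fun i _ => e i, ← Finset.mul_sum, hrdef]
    norm_cast
  have rhs_eq : ∑ i, (starRingEnd ℂ) (v i) * (M *ᵥ v) i
      = ∑ i, ∑ j, (starRingEnd ℂ) (v i) * ((A i j : ℂ) * v j) := by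
    simp [mulVec, dotProduct, Finset.mul_sum, hMdef, map_apply]
  have stepA : ‖μ‖ * r ≤ ∑ i, ∑ j, x i * A i j * x j := by
    have h1 : ‖μ‖ * r = ‖μ * (r : ℂ)‖ := by
      rw [norm_mul, Complex.norm_real, Real.norm_eq_abs, abs_of_pos hr0]
    rw [h1, ← lhs_eq, rhs_eq]
    refine (norm_sum_le _ _).trans ?_
    refine Finset.sum_le_sum fun i _ => (norm_sum_le _ _).trans ?_
    refine Finset.sum_le_sum fun j _ => ?_
    rw [norm_mul, norm_mul, RCLike.norm_conj, Complex.norm_real,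
      Real.norm_eq_abs, abs_of_nonneg (hA i j)]
    exact le_of_eq (by rw [hxdef]; ring)
  -- Step B : symmetrize
  have swap : ∑ i, ∑ j, x i * A j i * x j = ∑ i, ∑ j, x i * A i j * x j := by
    rw [Finset.sum_comm]
    exact Finset.sum_congr rfl fun i _ => Finset.sum_congr rfl fun j _ => by ring
  have stepB : ∑ i, ∑ j, x i * A i j * x j = ∑ i, ∑ j, x i * S i j * x j := by
    calc ∑ i, ∑ j, x i * A i j * x j
        = (1/2) * (∑ i, ∑ j, x i * A i j * x j) + (1/2) * (∑ i, ∑ j, x i * A j i * x j) := by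
          rw [swap]; ring
      _ = ∑ i, ∑ j, x i * S i j * x j := by
          rw [Finset.mul_sum, Finset.mul_sum, ← Finset.sum_add_distrib]
          refine Finset.sum_congr rfl fun i _ => ?_
          rw [Finset.mul_sum, Finset.mul_sum, ← Finset.sum_add_distrib]
          refine Finset.sum_congr rfl fun j _ => ?_
          simp only [hSdef, Matrix.smul_apply, Matrix.add_apply, transpose_apply, smul_eq_mul]
          ring
  -- Step C : quadratic form bound
  set u : EuclideanSpace ℂ (Fin n) := (WithLp.equiv 2 _).symm (fun i => ((x i : ℂ))) with hudef
  have hunorm : ‖u‖ ^ 2 = r := by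
    rw [EuclideanSpace.norm_eq]
    rw [Real.sq_sqrt (Finset.sum_nonneg fun i _ => sq_nonneg _)]
    refine Finset.sum_congr rfl fun i _ => ?_
    simp [hudef, Complex.norm_real, abs_of_nonneg (hx0 i)]
  have stepC : ∑ i, ∑ j, x i * S i j * x j ≤ ‖C‖ * r := by
    have hCu : C u = (WithLp.equiv 2 _).symm (T *ᵥ (fun i => ((x i : ℂ)))) := by
      rw [hudef, hCdef]; rfl
    have hinner : (inner ℂ u (C u) : ℂ) = ((∑ i, ∑ j, x i * S i j * x j : ℝ) : ℂ) := by
      rw [EuclideanSpace.inner_eq_star_dotProduct, hCu]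
      push_cast
      simp [hudef, dotProduct, mulVec, hTdef, map_apply, Finset.mul_sum, Finset.sum_mul]
      exact Finset.sum_congr rfl fun i _ => Finset.sum_congr rfl fun j _ => by ring
    have hq : (∑ i, ∑ j, x i * S i j * x j) ≤ ‖(inner ℂ u (C u) : ℂ)‖ := by
      rw [hinner, Complex.norm_real]
      exact le_abs_self _
    refine hq.trans ?_
    refine (norm_inner_le_norm u (C u)).trans ?_
    calc ‖u‖ * ‖C u‖ ≤ ‖u‖ * (‖C‖ * ‖u‖) :=
          mul_le_mul_of_nonneg_left (C.le_opNorm u) (norm_nonneg _)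
      _ = ‖C‖ * r := by rw [← hunorm]; ring
  have := (stepA.trans (le_of_eq stepB)).trans stepC
  exact le_of_mul_le_mul_right this hr0
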